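/- For a reduced quaternion-valued C¹ function F on an open set Ω ⊆ ℝ², the equation DF + λF = 0 holds if and only if FD + λF = 0, where FD denotes applying the Dirac operator from the right (i.e. (∂F/∂x)i + (∂F/∂y)j). -/

import Mathlib

/-- The quaternionic imaginary unit `i`. -/
def quatI : Quaternion ℝ := ⟨0, 1, 0, 0⟩

/-- The quaternionic imaginary unit `j`. -/
def quatJ : Quaternion ℝ := ⟨0, 0, 1, 0⟩

/-- The quaternionic Dirac operator acting on the left: `DF = i ∂F/∂x + j ∂F/∂y`. -/
noncomputable def diracDLeft (F : ℝ × ℝ → Quaternion ℝ) (p : ℝ × ℝ) : Quaternion ℝ :=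
  quatI * fderiv ℝ F p (1, 0) +
    quatJ * fderiv ℝ F p (0, 1)

/-- The quaternionic Dirac operator acting on the right: `FD = (∂F/∂x)i + (∂F/∂y)j`. -/
noncomputable def diracDRight (F : ℝ × ℝ → Quaternion ℝ) (p : ℝ × ℝ) : Quaternion ℝ :=
  fderiv ℝ F p (1, 0) * quatI +
    fderiv ℝ F p (0, 1) * quatJ

/-- For a reduced quaternion-valued `C¹` function `F` on an open set `Ω ⊆ ℝ²`,
the equation `DF + λF = 0` holds on `Ω` iff `FD + λF = 0` holds on `Ω`. -/
noncomputable def imKCLM : Quaternion ℝ →L[ℝ] ℝ :=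
  { toLinearMap := QuaternionAlgebra.imKₗ _ _ _, cont := Quaternion.continuous_imK }

@[simp] lemma quatI_re : quatI.re = 0 := rfl
@[simp] lemma quatI_imI : quatI.imI = 1 := rfl
@[simp] lemma quatI_imJ : quatI.imJ = 0 := rfl
@[simp] lemma quatI_imK : quatI.imK = 0 := rfl
@[simp] lemma quatJ_re : quatJ.re = 0 := rfl
@[simp] lemma quatJ_imI : quatJ.imI = 0 := rfl
@[simp] lemma quatJ_imJ : quatJ.imJ = 1 := rfl
@[simp] lemma quatJ_imK : quatJ.imK = 0 := rfl

lemma key (u v f : Quaternion ℝ) (lam : ℝ) (hu : u.imK = 0) (hv : v.imK = 0)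
    (hf : f.imK = 0) :
    quatI * u + quatJ * v + lam • f = 0 ↔ u * quatI + v * quatJ + lam • f = 0 := by
  simp only [Quaternion.ext_iff, Quaternion.re_add, Quaternion.imI_add, Quaternion.imJ_add,
    Quaternion.imK_add, Quaternion.re_mul, Quaternion.imI_mul, Quaternion.imJ_mul,
    Quaternion.imK_mul, Quaternion.re_smul, Quaternion.imI_smul, Quaternion.imJ_smul,
    Quaternion.imK_smul, Quaternion.re_zero, Quaternion.imI_zero, Quaternion.imJ_zero,
    Quaternion.imK_zero, quatI_re, quatI_imI, quatI_imJ, quatI_imK, quatJ_re, quatJ_imI,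
    quatJ_imJ, quatJ_imK, hu, hv, hf, smul_eq_mul]
  constructor <;> rintro ⟨h1, h2, h3, h4⟩ <;>
    exact ⟨by linarith, by linarith, by linarith, by linarith⟩

lemma imK_fderiv (Ω : Set (ℝ × ℝ)) (hΩ : IsOpen Ω) (F : ℝ × ℝ → Quaternion ℝ)
    (hF : ContDiffOn ℝ 1 F Ω) (hred : ∀ p ∈ Ω, (F p).imK = 0) {p : ℝ × ℝ} (hp : p ∈ Ω)
    (v : ℝ × ℝ) : (fderiv ℝ F p v).imK = 0 := by
  have hd : DifferentiableAt ℝ F p :=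
    (hF.contDiffAt (hΩ.mem_nhds hp)).differentiableAt one_ne_zero
  have h1 : HasFDerivAt (fun q => imKCLM (F q)) (imKCLM.comp (fderiv ℝ F p)) p :=
    imKCLM.hasFDerivAt.comp p hd.hasFDerivAt
  have h2 : (fun q => imKCLM (F q)) =ᶠ[nhds p] fun _ => (0 : ℝ) := by
    filter_upwards [hΩ.mem_nhds hp] with q hq
    exact hred q hq
  have h3 : HasFDerivAt (fun _ : ℝ × ℝ => (0 : ℝ)) (imKCLM.comp (fderiv ℝ F p)) p :=
    h1.congr_of_eventuallyEq h2.symm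
  have h4 : imKCLM.comp (fderiv ℝ F p) = 0 :=
    h3.unique (hasFDerivAt_const 0 p)
  have := congrFun (congrArg DFunLike.coe h4) v
  exact this

theorem metamonogenic_left_iff_right (Ω : Set (ℝ × ℝ)) (hΩ : IsOpen Ω) (lam : ℝ)
    (F : ℝ × ℝ → Quaternion ℝ) (hF : ContDiffOn ℝ 1 F Ω)
    (hred : ∀ p ∈ Ω, (F p).imK = 0) :
    (∀ p ∈ Ω, diracDLeft F p + lam • F p = 0) ↔
      (∀ p ∈ Ω, diracDRight F p + lam • F p = 0) := by
  have hk := fun p (hp : p ∈ Ω) =>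
    key (fderiv ℝ F p (1, 0)) (fderiv ℝ F p (0, 1)) (F p) lam
      (imK_fderiv Ω hΩ F hF hred hp _) (imK_fderiv Ω hΩ F hF hred hp _) (hred p hp)
  constructor <;> intro h p hp
  · exact (hk p hp).mp (h p hp)
  · exact (hk p hp).mpr (h p hp)
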